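/- Let S be a finite singleton-rich semigroup and s₁, s₂ ∈ S. Then (s₁s₂)* ≤ s₂* and (s₁s₂)⁺ ≤ s₁⁺, where ≤ is the natural partial order on idempotents (e ≤ f iff ef = fe = e). -/
import Mathlib


open scoped Classical

/-- φ*(s): the idempotent right identities of `s`. -/
def rIds {S : Type*} [Mul S] (s : S) : Set S := {e | e * e = e ∧ s * e = s}

/-- φ⁺(s): the idempotent left identities of `s`. -/
def lIds {S : Type*} [Mul S] (s : S) : Set S := {e | e * e = e ∧ e * s = s}

/-- `x` is the (necessarily unique) element of a singleton kernel (minimal ideal) of the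
subsemigroup `T`: `{x}` is an ideal of `T`, hence the minimal ideal of `T`. -/
def IsKer {S : Type*} [Semigroup S] (T : Subsemigroup S) (x : S) : Prop :=
  x ∈ T ∧ ∀ a ∈ T, a * x = x ∧ x * a = x

/-- The natural partial order on idempotents: `e ≤ f` iff `ef = fe = e`. -/
def nle {S : Type*} [Mul S] (e f : S) : Prop := e * f = e ∧ f * e = e

/-- The relation `≪`: `s ≪ t` iff `s = s⁺ t s*`, where `sa s = s*` and `pl s = s⁺`. -/
def ll {S : Type*} [Mul S] (sa pl : S → S) (s t : S) : Prop := s = pl s * t * sa s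

/-- In a finite singleton-rich semigroup, `(s₁s₂)* ≤ s₂*` and `(s₁s₂)⁺ ≤ s₁⁺`. -/
theorem stmt4 {S : Type*} [Semigroup S] [Fintype S] (sa pl : S → S)
    (hsa : ∀ s : S, IsKer (Subsemigroup.closure (rIds s)) (sa s))
    (hpl : ∀ s : S, IsKer (Subsemigroup.closure (lIds s)) (pl s))
    (s₁ s₂ : S) :
    nle (sa (s₁ * s₂)) (sa s₂) ∧ nle (pl (s₁ * s₂)) (pl s₁) := by
  constructor
  · -- rIds s₂ ⊆ rIds (s₁ * s₂)
    have hsub : rIds s₂ ⊆ rIds (s₁ * s₂) := by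
      rintro e ⟨he, hid⟩
      exact ⟨he, by rw [mul_assoc, hid]⟩
    have hmem : sa s₂ ∈ Subsemigroup.closure (rIds (s₁ * s₂)) :=
      Subsemigroup.closure_mono hsub (hsa s₂).1
    have h := (hsa (s₁ * s₂)).2 (sa s₂) hmem
    exact ⟨h.2, h.1⟩
  · have hsub : lIds s₁ ⊆ lIds (s₁ * s₂) := by
      rintro e ⟨he, hid⟩
      exact ⟨he, by rw [← mul_assoc, hid]⟩
    have hmem : pl s₁ ∈ Subsemigroup.closure (lIds (s₁ * s₂)) :=
      Subsemigroup.closure_mono hsub (hpl s₁).1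
    have h := (hpl (s₁ * s₂)).2 (pl s₁) hmem
    exact ⟨h.2, h.1⟩
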